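/- arXiv:1803.08166 — 3 statements merged into one kernel-verified Lean document; each statement's English description precedes it below -/
import Mathlib

section
/- The map A ↦ ȳ(A) satisfies lim_{A → 0⁺} ȳ(A) = +∞ and lim_{A → (k₂/θ²)⁻} ȳ(A) = 0. -/
/-- `h_A(y) = A θ e^{θ y} − A θ e^{−θ y} − 2 k₂ y`. -/
noncomputable def hFun (θ k₂ A y : ℝ) : ℝ :=
  A * θ * Real.exp (θ * y) - A * θ * Real.exp (-(θ * y)) - 2 * k₂ * y

open Real

-- sinh x < x * cosh x for x > 0
lemma sinh_lt_mul_cosh {x : ℝ} (hx : 0 < x) : Real.sinh x < x * Real.cosh x := by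
  have h : StrictMonoOn (fun x : ℝ => x * Real.cosh x - Real.sinh x) (Set.Ici 0) := by
    apply strictMonoOn_of_deriv_pos (convex_Ici 0)
    · fun_prop
    · intro y hy
      rw [interior_Ici] at hy
      have : HasDerivAt (fun x : ℝ => x * Real.cosh x - Real.sinh x) (y * Real.sinh y) y := by
        have h1 := (hasDerivAt_id y).mul (Real.hasDerivAt_cosh y)
        have h2 := (h1.sub (Real.hasDerivAt_sinh y))
        refine h2.congr_deriv ?_
        simp [id_eq, mul_comm]
      rw [this.deriv]
      exact mul_pos hy (Real.sinh_pos_iff.2 hy)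
  have := h (Set.self_mem_Ici) (Set.mem_Ici.2 hx.le) hx
  simpa using this

lemma sinh_div_mono : StrictMonoOn (fun x : ℝ => Real.sinh x / x) (Set.Ioi 0) := by
  apply strictMonoOn_of_deriv_pos (convex_Ioi 0)
  · exact Real.continuous_sinh.continuousOn.div continuous_id.continuousOn
      (fun x hx => ne_of_gt hx)
  · intro y hy
    rw [interior_Ioi] at hy
    have hy0 : (0:ℝ) < y := hy
    have hd : HasDerivAt (fun x : ℝ => Real.sinh x / x)
        ((Real.cosh y * y - Real.sinh y * 1) / y ^ 2) y :=
      (Real.hasDerivAt_sinh y).div (hasDerivAt_id y) (ne_of_gt hy0)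
    rw [hd.deriv]
    apply div_pos _ (by positivity)
    have := sinh_lt_mul_cosh hy0
    nlinarith

lemma hFun_eq {θ k₂ A y : ℝ} (h : hFun θ k₂ A y = 0) :
    A * θ * Real.sinh (θ * y) = k₂ * y := by
  have := Real.sinh_eq (θ * y)
  unfold hFun at h
  rw [this]; linarith

theorem stmt_2 (θ k₂ : ℝ) (hθ : 0 < θ) (hk : 0 < k₂) (ybar : ℝ → ℝ)
    (hybar : ∀ A : ℝ, 0 < A → A < k₂ / θ ^ 2 →
      0 < ybar A ∧ hFun θ k₂ A (ybar A) = 0) :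
    Filter.Tendsto ybar (nhdsWithin 0 (Set.Ioi 0)) Filter.atTop ∧
      Filter.Tendsto ybar (nhdsWithin (k₂ / θ ^ 2) (Set.Iio (k₂ / θ ^ 2))) (nhds 0) := by
  constructor
  · rw [Filter.tendsto_atTop]
    intro M
    set M' := max M 1 with hM'
    have hM'pos : (0:ℝ) < M' := lt_of_lt_of_le one_pos (le_max_right _ _)
    have hcoshpos : 0 < Real.cosh (θ * M') := Real.cosh_pos _
    set c := k₂ / (θ ^ 2 * Real.cosh (θ * M')) with hc
    have hcpos : 0 < c := by positivity
    filter_upwards [Ioo_mem_nhdsGT_of_mem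
      (show (0:ℝ) ∈ Set.Ico 0 c from ⟨le_refl 0, hcpos⟩)] with A hA
    obtain ⟨hA0, hAc⟩ := hA
    have hcosh1 : (1:ℝ) < Real.cosh (θ * M') :=
      Real.one_lt_cosh.2 (ne_of_gt (by positivity))
    have hAbar : A < k₂ / θ ^ 2 := by
      apply lt_of_lt_of_le hAc
      rw [hc]
      apply div_le_div_of_nonneg_left hk.le (by positivity)
      nlinarith
    obtain ⟨hy0, heq0⟩ := hybar A hA0 hAbar
    set y := ybar A with hy
    have heq := hFun_eq heq0
    by_contra hcon
    push_neg at hcon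
    have hyM : y ≤ M' := le_trans hcon.le (le_max_left _ _)
    have hsinh : Real.sinh (θ * y) < θ * y * Real.cosh (θ * y) :=
      sinh_lt_mul_cosh (by positivity)
    have hcoshm : Real.cosh (θ * y) ≤ Real.cosh (θ * M') := by
      rw [Real.cosh_le_cosh]
      rw [abs_of_pos (by positivity), abs_of_pos (by positivity)]
      exact mul_le_mul_of_nonneg_left hyM hθ.le
    have hkey : k₂ * y < A * θ * (θ * y * Real.cosh (θ * M')) := by
      rw [← heq]
      have h2 : θ * y * Real.cosh (θ * y) ≤ θ * y * Real.cosh (θ * M') :=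
        mul_le_mul_of_nonneg_left hcoshm (by positivity)
      exact mul_lt_mul_of_pos_left (lt_of_lt_of_le hsinh h2) (mul_pos hA0 hθ)
    have hAc' : c < A := by
      rw [hc, div_lt_iff₀ (by positivity)]
      nlinarith
    linarith
  · rw [tendsto_order]
    have hbarpos : (0:ℝ) < k₂ / θ ^ 2 := by positivity
    constructor
    · intro a ha
      filter_upwards [Ioo_mem_nhdsLT_of_mem
        (show k₂ / θ ^ 2 ∈ Set.Ioc 0 (k₂ / θ ^ 2) from ⟨hbarpos, le_refl _⟩)] with A hA
      exact lt_trans ha (hybar A hA.1 hA.2).1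
    · intro ε hε
      have hsinhε : 0 < Real.sinh (θ * ε) := Real.sinh_pos_iff.2 (by positivity)
      set Aε := k₂ * ε / (θ * Real.sinh (θ * ε)) with hAε
      have hAεpos : 0 < Aε := by positivity
      have hAεbar : Aε < k₂ / θ ^ 2 := by
        rw [hAε, div_lt_div_iff₀ (by positivity) (by positivity)]
        have h1 : θ * ε < Real.sinh (θ * ε) := Real.self_lt_sinh_iff.2 (by positivity)
        nlinarith [mul_lt_mul_of_pos_left h1 (mul_pos hk hθ)]
      filter_upwards [Ioo_mem_nhdsLT_of_mem
        (show k₂ / θ ^ 2 ∈ Set.Ioc Aε (k₂ / θ ^ 2) from ⟨hAεbar, le_refl _⟩)] with A hA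
      obtain ⟨hA1, hA2⟩ := hA
      have hA0 : 0 < A := lt_trans hAεpos hA1
      obtain ⟨hy0, heq0⟩ := hybar A hA0 hA2
      set y := ybar A with hy
      have heq := hFun_eq heq0
      by_contra hcon
      push_neg at hcon
      have hεy : ε ≤ y := hcon
      have hsinhy : 0 < Real.sinh (θ * y) := Real.sinh_pos_iff.2 (by positivity)
      have hmono : Real.sinh (θ * ε) / (θ * ε) ≤ Real.sinh (θ * y) / (θ * y) := by
        rcases eq_or_lt_of_le hεy with h | h
        · rw [h]
        · exact (sinh_div_mono (Set.mem_Ioi.2 (by positivity)) (Set.mem_Ioi.2 (by positivity))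
            ((mul_lt_mul_iff_right₀ hθ).2 h)).le
      rw [div_le_div_iff₀ (by positivity) (by positivity)] at hmono
      -- sinh(θε) * (θ y) ≤ sinh(θ y) * (θ ε)
      have hAle : A ≤ Aε := by
        rw [hAε, le_div_iff₀ (by positivity)]
        nlinarith
      linarith
end

section
/- For every c > 0 there exists a unique pair (A, ȳ) of real numbers with A > 0 and ȳ > 0 satisfying the two equations A θ e^{θ ȳ} − A θ e^{−θ ȳ} − 2 k₂ ȳ = 0 and A e^{θ ȳ} + A e^{−θ ȳ} − k₂ ȳ² − 2A + c = 0. -/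
open Real Set

/-- `sinh x ≤ x * cosh x` for `x ≥ 0` (i.e. `tanh x ≤ x`). -/
lemma aux_sinh_le (x : ℝ) (hx : 0 ≤ x) : Real.sinh x ≤ x * Real.cosh x := by
  have hmono : MonotoneOn (fun t : ℝ => t * Real.cosh t - Real.sinh t) (Set.Ici 0) := by
    have hd : ∀ t : ℝ, HasDerivAt (fun t : ℝ => t * Real.cosh t - Real.sinh t)
        (t * Real.sinh t) t := by
      intro t
      have h1 : HasDerivAt (fun t : ℝ => t * Real.cosh t)
          (1 * Real.cosh t + t * Real.sinh t) t :=
        (hasDerivAt_id t).mul (Real.hasDerivAt_cosh t)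
      have : HasDerivAt (fun t : ℝ => t * Real.cosh t - Real.sinh t)
          (1 * Real.cosh t + t * Real.sinh t - Real.cosh t) t := h1.sub (Real.hasDerivAt_sinh t)
      convert this using 1; ring
    apply monotoneOn_of_deriv_nonneg (convex_Ici 0)
    · exact ((continuous_id.mul Real.continuous_cosh).sub Real.continuous_sinh).continuousOn
    · intro t ht
      exact ((hd t).differentiableAt).differentiableWithinAt
    · intro t ht
      rw [interior_Ici, mem_Ioi] at ht
      rw [(hd t).deriv]
      exact mul_nonneg ht.le (by simpa using ht.le)
  have := hmono (self_mem_Ici) hx hx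
  simp at this
  linarith

/-- The reduced scalar function. -/
noncomputable def gfun (θ k₂ c : ℝ) : ℝ → ℝ :=
  fun y => k₂ * y ^ 2 - (2 * k₂ / θ) * (y * (Real.sinh (θ * y / 2) / Real.cosh (θ * y / 2))) - c

lemma gfun_hasDerivAt (θ k₂ c : ℝ) (y : ℝ) :
    HasDerivAt (gfun θ k₂ c)
      (k₂ * (2 * y) - (2 * k₂ / θ) *
        (1 * (Real.sinh (θ * y / 2) / Real.cosh (θ * y / 2)) +
          y * ((Real.cosh (θ * y / 2) * (θ / 2) * Real.cosh (θ * y / 2) -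
            Real.sinh (θ * y / 2) * (Real.sinh (θ * y / 2) * (θ / 2))) /
            Real.cosh (θ * y / 2) ^ 2))) y := by
  have h1 : HasDerivAt (fun y : ℝ => θ * y / 2) (θ / 2) y := by
    simpa using ((hasDerivAt_id y).const_mul θ).div_const 2
  have hs := h1.sinh
  have hc := h1.cosh
  have hq := hs.div hc (Real.cosh_pos _).ne'
  have hm := (hasDerivAt_id y).mul hq
  have hp : HasDerivAt (fun y : ℝ => k₂ * y ^ 2) (k₂ * (2 * y)) y := by
    simpa using (hasDerivAt_pow 2 y).const_mul k₂
  exact (hp.sub (hm.const_mul (2 * k₂ / θ))).sub_const c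

lemma gfun_strictMono (θ k₂ c : ℝ) (hθ : 0 < θ) (hk : 0 < k₂) :
    StrictMonoOn (gfun θ k₂ c) (Set.Ici 0) := by
  apply strictMonoOn_of_deriv_pos (convex_Ici 0)
  · unfold gfun
    have h1 : Continuous fun y : ℝ => θ * y / 2 := by continuity
    exact (((continuous_const.mul (continuous_pow 2)).sub
      (continuous_const.mul (continuous_id.mul ((Real.continuous_sinh.comp h1).div
        (Real.continuous_cosh.comp h1) (fun x => (Real.cosh_pos _).ne'))))).sub
      continuous_const).continuousOn
  · intro y hy
    rw [interior_Ici, mem_Ioi] at hy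
    rw [(gfun_hasDerivAt θ k₂ c y).deriv]
    set u := θ * y / 2 with hu
    have hupos : 0 < u := by positivity
    have hcpos : 0 < Real.cosh u := Real.cosh_pos u
    have hspos : 0 < Real.sinh u := Real.sinh_pos_iff.mpr hupos
    have hc1 : 1 < Real.cosh u := Real.one_lt_cosh.mpr hupos.ne'
    have hsq : Real.cosh u ^ 2 - Real.sinh u ^ 2 = 1 := Real.cosh_sq_sub_sinh_sq u
    have hle : Real.sinh u ≤ u * Real.cosh u := aux_sinh_le u hupos.le
    set s := Real.sinh u
    set cc := Real.cosh u
    have key : (k₂ * (2 * y) - (2 * k₂ / θ) *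
        (1 * (s / cc) + y * ((cc * (θ / 2) * cc - s * (s * (θ / 2))) / cc ^ 2))) * cc ^ 2
        = 2 * k₂ * y * cc ^ 2 - (2 * k₂ / θ) * s * cc - k₂ * y * (cc ^ 2 - s ^ 2) := by
      field_simp
      ring
    have hscc : s * cc ≤ (θ * y / 2) * cc * cc := by
      have := mul_le_mul_of_nonneg_right hle hcpos.le
      calc s * cc ≤ u * cc * cc := this
        _ = (θ * y / 2) * cc * cc := by rw [hu]
    have hpos2 : 0 < (k₂ * (2 * y) - (2 * k₂ / θ) *
        (1 * (s / cc) + y * ((cc * (θ / 2) * cc - s * (s * (θ / 2))) / cc ^ 2))) * cc ^ 2 := by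
      rw [key, hsq]
      have h2 : (2 * k₂ / θ) * (s * cc) ≤ (2 * k₂ / θ) * ((θ * y / 2) * cc * cc) :=
        mul_le_mul_of_nonneg_left hscc (by positivity)
      have h3 : (2 * k₂ / θ) * ((θ * y / 2) * cc * cc) = k₂ * y * cc ^ 2 := by
        field_simp
      have h4 : 1 < cc ^ 2 := by nlinarith
      nlinarith [mul_pos (mul_pos hk hy) (sub_pos.mpr h4)]
    nlinarith [pow_pos hcpos 2, hpos2]

lemma gfun_continuous (θ k₂ c : ℝ) : Continuous (gfun θ k₂ c) := by
  unfold gfun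
  have h1 : Continuous fun y : ℝ => θ * y / 2 := by continuity
  exact ((continuous_const.mul (continuous_pow 2)).sub
    (continuous_const.mul (continuous_id.mul ((Real.continuous_sinh.comp h1).div
      (Real.continuous_cosh.comp h1) (fun x => (Real.cosh_pos _).ne'))))).sub
    continuous_const

lemma sol_char (θ k₂ c : ℝ) (hθ : 0 < θ) (A y : ℝ) (hy : 0 < y) :
    (A * θ * Real.exp (θ * y) - A * θ * Real.exp (-(θ * y)) - 2 * k₂ * y = 0 ∧
     A * Real.exp (θ * y) + A * Real.exp (-(θ * y)) - k₂ * y ^ 2 - 2 * A + c = 0) ↔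
    (A = k₂ * y / (θ * Real.sinh (θ * y)) ∧ gfun θ k₂ c y = 0) := by
  have hsy : 0 < Real.sinh (θ * y) := Real.sinh_pos_iff.mpr (by positivity)
  have hcu : 0 < Real.cosh (θ * y / 2) := Real.cosh_pos _
  have hsu : 0 < Real.sinh (θ * y / 2) := Real.sinh_pos_iff.mpr (by positivity)
  have hsinh_eq : Real.exp (θ * y) - Real.exp (-(θ * y)) = 2 * Real.sinh (θ * y) := by
    rw [Real.sinh_eq]; ring
  have hcosh_eq : Real.exp (θ * y) + Real.exp (-(θ * y)) = 2 * Real.cosh (θ * y) := by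
    rw [Real.cosh_eq]; ring
  have hc2 : Real.cosh (θ * y / 2) ^ 2 = Real.sinh (θ * y / 2) ^ 2 + 1 := Real.cosh_sq _
  have hA1 : Real.cosh (θ * y) = 2 * Real.sinh (θ * y / 2) ^ 2 + 1 := by
    have h := Real.cosh_two_mul (θ * y / 2)
    rw [show 2 * (θ * y / 2) = θ * y by ring] at h
    rw [h, hc2]; ring
  have hA2 : Real.sinh (θ * y) = 2 * Real.sinh (θ * y / 2) * Real.cosh (θ * y / 2) := by
    have h := Real.sinh_two_mul (θ * y / 2)
    rw [show 2 * (θ * y / 2) = θ * y by ring] at h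
    exact h
  constructor
  · rintro ⟨e1, e2⟩
    have h : A * (θ * Real.sinh (θ * y)) = k₂ * y := by
      linear_combination e1 / 2 - (A * θ / 2) * hsinh_eq
    have hA : A = k₂ * y / (θ * Real.sinh (θ * y)) := (eq_div_iff (by positivity)).mpr h
    refine ⟨hA, ?_⟩
    have heq : 2 * A * (Real.cosh (θ * y) - 1) = k₂ * y ^ 2 - c := by
      linear_combination e2 - A * hcosh_eq
    rw [hA, hA2, hA1] at heq
    have hgoal : (2 * k₂ / θ) * (y * (Real.sinh (θ * y / 2) / Real.cosh (θ * y / 2)))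
        = k₂ * y ^ 2 - c := by
      rw [← heq]; field_simp; ring
    show k₂ * y ^ 2 - (2 * k₂ / θ) * (y * (Real.sinh (θ * y / 2) / Real.cosh (θ * y / 2))) - c = 0
    linarith
  · rintro ⟨hA, hg⟩
    have h : A * (θ * Real.sinh (θ * y)) = k₂ * y := by
      rw [hA]; field_simp
    have hg' : k₂ * y ^ 2 - (2 * k₂ / θ) * (y * (Real.sinh (θ * y / 2) / Real.cosh (θ * y / 2)))
        - c = 0 := hg
    have hgoal : (2 * k₂ / θ) * (y * (Real.sinh (θ * y / 2) / Real.cosh (θ * y / 2)))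
        = k₂ * y ^ 2 - c := by linarith
    have heq : 2 * A * (Real.cosh (θ * y) - 1) = k₂ * y ^ 2 - c := by
      rw [hA, hA2, hA1, ← hgoal]; field_simp; ring
    constructor
    · linear_combination 2 * h + A * θ * hsinh_eq
    · linear_combination heq + A * hcosh_eq

theorem stmt_6 (θ k₂ c : ℝ) (hθ : 0 < θ) (hk : 0 < k₂) (hc : 0 < c) :
    ∃! p : ℝ × ℝ, 0 < p.1 ∧ 0 < p.2 ∧
      p.1 * θ * Real.exp (θ * p.2) - p.1 * θ * Real.exp (-(θ * p.2)) - 2 * k₂ * p.2 = 0 ∧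
      p.1 * Real.exp (θ * p.2) + p.1 * Real.exp (-(θ * p.2)) - k₂ * p.2 ^ 2 - 2 * p.1 + c = 0 := by
  set Y : ℝ := 2 / θ + (c + 1) / k₂ + 1 with hYdef
  have hYpos : 0 < Y := by positivity
  have hg0 : gfun θ k₂ c 0 = -c := by unfold gfun; simp
  have hgY : 0 < gfun θ k₂ c Y := by
    have ht1 : Real.sinh (θ * Y / 2) / Real.cosh (θ * Y / 2) < 1 :=
      (div_lt_one (Real.cosh_pos _)).mpr (Real.sinh_lt_cosh _)
    have ht0 : 0 ≤ Real.sinh (θ * Y / 2) / Real.cosh (θ * Y / 2) :=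
      div_nonneg (Real.sinh_nonneg_iff.mpr (by positivity)) (Real.cosh_pos _).le
    have hbound : (2 * k₂ / θ) * (Y * (Real.sinh (θ * Y / 2) / Real.cosh (θ * Y / 2)))
        ≤ (2 * k₂ / θ) * Y := by
      apply mul_le_mul_of_nonneg_left _ (by positivity)
      exact (mul_le_mul_of_nonneg_left ht1.le hYpos.le).trans_eq (mul_one Y)
    have h5 : k₂ * Y - 2 * k₂ / θ = c + 1 + k₂ := by rw [hYdef]; field_simp; ring
    have h7 : k₂ * Y ^ 2 - (2 * k₂ / θ) * Y = Y * (c + 1 + k₂) := by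
      linear_combination Y * h5
    have h6 : 1 ≤ Y := by
      have : 0 ≤ 2 / θ + (c + 1) / k₂ := by positivity
      rw [hYdef]; linarith
    clear_value Y
    have h8 : (c + 1 + k₂) ≤ Y * (c + 1 + k₂) := by
      simpa using mul_le_mul_of_nonneg_right h6 (show (0:ℝ) ≤ c + 1 + k₂ by positivity)
    have key : 0 < k₂ * Y ^ 2 - (2 * k₂ / θ) * Y - c := by linarith [h7, h8]
    show 0 < k₂ * Y ^ 2 - (2 * k₂ / θ) * (Y * (Real.sinh (θ * Y / 2) / Real.cosh (θ * Y / 2))) - c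
    linarith [hbound, key]
  obtain ⟨y₀, hy₀, hgy₀⟩ := intermediate_value_Ioo hYpos.le
    (gfun_continuous θ k₂ c).continuousOn
    (show (0:ℝ) ∈ Set.Ioo (gfun θ k₂ c 0) (gfun θ k₂ c Y) from ⟨by rw [hg0]; linarith, hgY⟩)
  have hy₀pos : 0 < y₀ := hy₀.1
  have hsy₀ : 0 < Real.sinh (θ * y₀) := Real.sinh_pos_iff.mpr (by positivity)
  set A₀ : ℝ := k₂ * y₀ / (θ * Real.sinh (θ * y₀)) with hA₀
  have hA₀pos : 0 < A₀ := by rw [hA₀]; positivity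
  obtain ⟨e1, e2⟩ := (sol_char θ k₂ c hθ A₀ y₀ hy₀pos).mpr ⟨hA₀, hgy₀⟩
  refine ⟨(A₀, y₀), ⟨hA₀pos, hy₀pos, e1, e2⟩, ?_⟩
  rintro ⟨A, y⟩ ⟨hApos, hypos, h1, h2⟩
  obtain ⟨hA, hg⟩ := (sol_char θ k₂ c hθ A y hypos).mp ⟨h1, h2⟩
  have hy : y = y₀ :=
    (gfun_strictMono θ k₂ c hθ hk).injOn (Set.mem_Ici.mpr hypos.le)
      (Set.mem_Ici.mpr hy₀pos.le) (hg.trans hgy₀.symm)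
  simp only [Prod.mk.injEq]
  exact ⟨by rw [hA, hy, ← hA₀], hy⟩
end

section
/- One has lim_{c → 0⁺} A(c) = k₂/θ², and for every x ∈ ℝ, lim_{c → 0⁺} V^c(x) = y_v/ρ. -/
/-- `g(A) = −A e^{θ ȳ(A)} − A e^{−θ ȳ(A)} + k₂ ȳ(A)² + 2A`. -/
noncomputable def gFun (θ k₂ : ℝ) (ybar : ℝ → ℝ) (A : ℝ) : ℝ :=
  -A * Real.exp (θ * ybar A) - A * Real.exp (-(θ * ybar A)) + k₂ * (ybar A) ^ 2 + 2 * A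

/-- `φ_A(x) = A e^{θ(x−x_v)} + A e^{−θ(x−x_v)} − k₂ (x−x_v)² + k₀`. -/
noncomputable def phiFun (θ k₂ k₀ xv A x : ℝ) : ℝ :=
  A * Real.exp (θ * (x - xv)) + A * Real.exp (-(θ * (x - xv))) - k₂ * (x - xv) ^ 2 + k₀

/-- `V^c(x) = φ_{A(c)}(x)` on `(x_v − ȳ(c), x_v + ȳ(c))`, and `φ_{A(c)}(x_v) − c` otherwise. -/
noncomputable def VFun (θ k₂ k₀ xv : ℝ) (Ac ybc : ℝ → ℝ) (c x : ℝ) : ℝ :=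
  if xv - ybc c < x ∧ x < xv + ybc c then phiFun θ k₂ k₀ xv (Ac c) x
  else phiFun θ k₂ k₀ xv (Ac c) xv - c


open Real Set Filter

lemma aux_sinh_lt_mul_cosh {t : ℝ} (ht : 0 < t) : Real.sinh t < t * Real.cosh t := by
  have hmono : StrictMonoOn (fun s : ℝ => s * Real.cosh s - Real.sinh s) (Set.Ici (0:ℝ)) := by
    apply strictMonoOn_of_deriv_pos (convex_Ici 0)
    · exact ((continuous_id.mul Real.continuous_cosh).sub Real.continuous_sinh).continuousOn
    · intro x hx
      rw [interior_Ici, Set.mem_Ioi] at hx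
      have hd : HasDerivAt (fun s : ℝ => s * Real.cosh s - Real.sinh s) (x * Real.sinh x) x := by
        have := ((hasDerivAt_id x).mul (Real.hasDerivAt_cosh x)).sub (Real.hasDerivAt_sinh x)
        exact this.congr_deriv (by simp only [id_eq]; ring)
      rw [hd.deriv]
      exact mul_pos hx (Real.sinh_pos_iff.mpr hx)
  have h := hmono (Set.self_mem_Ici) (Set.mem_Ici.mpr ht.le) ht
  simp at h
  linarith

lemma aux_F_mono : StrictMonoOn (fun t : ℝ => t * Real.sinh t - 2 * Real.cosh t + 2) (Set.Ici (0:ℝ)) := by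
  apply strictMonoOn_of_deriv_pos (convex_Ici 0)
  · exact (((continuous_id.mul Real.continuous_sinh).sub
      (continuous_const.mul Real.continuous_cosh)).add continuous_const).continuousOn
  · intro x hx
    rw [interior_Ici, Set.mem_Ioi] at hx
    have hd : HasDerivAt (fun t : ℝ => t * Real.sinh t - 2 * Real.cosh t + 2)
        (x * Real.cosh x - Real.sinh x) x := by
      have := (((hasDerivAt_id x).mul (Real.hasDerivAt_sinh x)).sub
        ((Real.hasDerivAt_cosh x).const_mul 2)).add_const 2
      simpa using this.congr_deriv (by simp only [id_eq]; ring)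
    rw [hd.deriv]
    linarith [aux_sinh_lt_mul_cosh hx]

lemma aux_cosh_le_exp {t : ℝ} (ht : 0 ≤ t) : Real.cosh t ≤ Real.exp t := by
  rw [Real.cosh_eq]
  have : Real.exp (-t) ≤ Real.exp t := Real.exp_le_exp.mpr (by linarith)
  linarith

lemma aux_exp_neg_sinh_le {t : ℝ} (ht : 0 < t) : Real.exp (-t) * Real.sinh t ≤ t := by
  have h1 : Real.sinh t < t * Real.cosh t := aux_sinh_lt_mul_cosh ht
  have h2 : Real.cosh t ≤ Real.exp t := aux_cosh_le_exp ht.le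
  have hE : Real.exp (-t) * Real.exp t = 1 := by rw [← Real.exp_add]; simp
  have he : 0 < Real.exp (-t) := Real.exp_pos _
  calc Real.exp (-t) * Real.sinh t ≤ Real.exp (-t) * (t * Real.cosh t) :=
        mul_le_mul_of_nonneg_left h1.le he.le
    _ ≤ Real.exp (-t) * (t * Real.exp t) :=
        mul_le_mul_of_nonneg_left (mul_le_mul_of_nonneg_left h2 ht.le) he.le
    _ = t * (Real.exp (-t) * Real.exp t) := by ring
    _ = t := by rw [hE]; ring

lemma core_bound (K A t t₀ : ℝ) (hK : 0 < K) (hA : 0 < A) (ht₀ : 0 < t₀)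
    (hle : t₀ ≤ t) (hrel : A * Real.sinh t = K * t) :
    K * min (Real.exp (-3) * (min t₀ 3 * Real.sinh (min t₀ 3) - 2 * Real.cosh (min t₀ 3) + 2)) 3
      ≤ K * t ^ 2 - 2 * A * (Real.cosh t - 1) := by
  have ht : 0 < t := lt_of_lt_of_le ht₀ hle
  have hS : 0 < Real.sinh t := Real.sinh_pos_iff.mpr ht
  set t₁ : ℝ := min t₀ 3 with ht₁def
  have ht₁ : 0 < t₁ := lt_min ht₀ (by norm_num)
  have ht₁le : t₁ ≤ t := le_trans (min_le_left _ _) hle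
  set F₁ : ℝ := t₁ * Real.sinh t₁ - 2 * Real.cosh t₁ + 2 with hF₁def
  have hF₁pos : 0 < F₁ := by
    have := aux_F_mono (Set.self_mem_Ici) (Set.mem_Ici.mpr ht₁.le) ht₁
    simpa [hF₁def] using this
  have hFmono : F₁ ≤ t * Real.sinh t - 2 * Real.cosh t + 2 := by
    exact aux_F_mono.monotoneOn (Set.mem_Ici.mpr ht₁.le) (Set.mem_Ici.mpr ht.le) ht₁le
  have hFt : 0 < t * Real.sinh t - 2 * Real.cosh t + 2 := lt_of_lt_of_le hF₁pos hFmono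
  rcases le_or_gt t 3 with h3 | h3
  · -- small t case
    have hmin : min (Real.exp (-3) * F₁) 3 ≤ Real.exp (-3) * F₁ := min_le_left _ _
    have hee : Real.exp (-3) ≤ Real.exp (-t) := Real.exp_le_exp.mpr (by linarith)
    have step1 : Real.exp (-3) * F₁ ≤ Real.exp (-t) * (t * Real.sinh t - 2 * Real.cosh t + 2) :=
      mul_le_mul hee hFmono hF₁pos.le (Real.exp_pos _).le
    have step2 : (Real.exp (-t) * Real.sinh t) * (t * Real.sinh t - 2 * Real.cosh t + 2)
        ≤ t * (t * Real.sinh t - 2 * Real.cosh t + 2) :=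
      mul_le_mul_of_nonneg_right (aux_exp_neg_sinh_le ht) hFt.le
    -- multiply target by sinh t
    have key : (Real.exp (-3) * F₁) * Real.sinh t ≤ t * (t * Real.sinh t - 2 * Real.cosh t + 2) := by
      nlinarith
    have final : Real.sinh t * (K * min (Real.exp (-3) * F₁) 3)
        ≤ Real.sinh t * (K * t ^ 2 - 2 * A * (Real.cosh t - 1)) := by
      have hAs : A * Real.sinh t * (Real.cosh t - 1) = K * t * (Real.cosh t - 1) := by
        rw [hrel]
      nlinarith [mul_le_mul_of_nonneg_left key hK.le,
        mul_le_mul_of_nonneg_left (mul_le_mul_of_nonneg_right hmin hS.le) hK.le]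
    exact le_of_mul_le_mul_left final hS
  · -- large t case
    have hmin : min (Real.exp (-3) * F₁) 3 ≤ 3 := min_le_right _ _
    have hCS : Real.cosh t - Real.sinh t ≤ 1 := by
      rw [Real.cosh_sub_sinh]
      exact Real.exp_le_one_iff.mpr (by linarith)
    have h2AS : 2 * A * (Real.cosh t - 1) ≤ 2 * K * t := by
      nlinarith
    have hq : (3:ℝ) ≤ t ^ 2 - 2 * t := by nlinarith
    nlinarith [mul_le_mul_of_nonneg_left hmin hK.le, mul_le_mul_of_nonneg_left hq hK.le]

theorem stmt_12 (ρ σ Δ b θ k₂ k₀ α xv yv : ℝ)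
    (hρ : 0 < ρ) (hσ : 0 < σ) (hΔ : 0 < Δ) (hb : 0 ≤ b)
    (hθ : θ = Real.sqrt (2 * ρ) / σ)
    (hα : α = (Δ + b) / Δ ^ 2)
    (hxv : xv = Δ * (Δ + 2 * b) / (2 * (Δ + b)))
    (hyv : yv = Δ ^ 2 / (4 * (Δ + b)))
    (hk₂ : k₂ = α / ρ)
    (hk₀ : k₀ = yv / ρ - 2 * k₂ / θ ^ 2)
    (ybarA : ℝ → ℝ)
    (hybarA : ∀ A : ℝ, 0 < A → A < k₂ / θ ^ 2 →
      0 < ybarA A ∧ hFun θ k₂ A (ybarA A) = 0)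
    (Ac : ℝ → ℝ)
    (hAc : ∀ c : ℝ, 0 < c →
      0 < Ac c ∧ Ac c < k₂ / θ ^ 2 ∧ gFun θ k₂ ybarA (Ac c) = c) :
    Filter.Tendsto Ac (nhdsWithin 0 (Set.Ioi 0)) (nhds (k₂ / θ ^ 2)) ∧
    ∀ x : ℝ,
      Filter.Tendsto (fun c => VFun θ k₂ k₀ xv Ac (fun c => ybarA (Ac c)) c x)
        (nhdsWithin 0 (Set.Ioi 0)) (nhds (yv / ρ)) := by
  have hθ0 : 0 < θ := by
    rw [hθ]
    exact div_pos (Real.sqrt_pos.mpr (by linarith)) hσ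
  have hθne : θ ≠ 0 := hθ0.ne'
  have hk2 : 0 < k₂ := by
    rw [hk₂, hα]
    positivity
  have hKpos : 0 < k₂ / θ ^ 2 := by positivity
  -- basic facts about `Ac c` and `ybarA (Ac c)` for `c > 0`
  have hfacts : ∀ c : ℝ, 0 < c →
      0 < Ac c ∧ 0 < ybarA (Ac c) ∧
      Ac c * Real.sinh (θ * ybarA (Ac c)) = k₂ / θ ^ 2 * (θ * ybarA (Ac c)) ∧
      c = k₂ / θ ^ 2 * (θ * ybarA (Ac c)) ^ 2
        - 2 * Ac c * (Real.cosh (θ * ybarA (Ac c)) - 1) := by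
    intro c hc
    obtain ⟨hA0, hA1, hg⟩ := hAc c hc
    obtain ⟨hy0, hh⟩ := hybarA _ hA0 hA1
    unfold hFun at hh
    unfold gFun at hg
    set y := ybarA (Ac c) with hy
    refine ⟨hA0, hy0, ?_, ?_⟩
    · have h2 : Ac c * θ * Real.exp (θ * y) - Ac c * θ * Real.exp (-(θ * y)) = 2 * k₂ * y := by
        linarith
      have h3 : Ac c * Real.sinh (θ * y)
          = (Ac c * θ * Real.exp (θ * y) - Ac c * θ * Real.exp (-(θ * y))) / (2 * θ) := by
        rw [Real.sinh_eq]
        field_simp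
      rw [h3, h2]
      field_simp
    · have h4 : k₂ / θ ^ 2 * (θ * y) ^ 2 = k₂ * y ^ 2 := by
        field_simp
      rw [h4, Real.cosh_eq]
      linarith
  -- key quantitative lemma : `θ * ybarA (Ac c) → 0` as `c → 0⁺`
  have key : ∀ t₀ : ℝ, 0 < t₀ → ∃ δ : ℝ, 0 < δ ∧
      ∀ c : ℝ, 0 < c → c < δ → θ * ybarA (Ac c) < t₀ := by
    intro t₀ ht₀
    have ht₁ : 0 < min t₀ 3 := lt_min ht₀ (by norm_num)
    have hF₁pos : 0 < min t₀ 3 * Real.sinh (min t₀ 3) - 2 * Real.cosh (min t₀ 3) + 2 := by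
      simpa using aux_F_mono Set.self_mem_Ici (Set.mem_Ici.mpr ht₁.le) ht₁
    refine ⟨k₂ / θ ^ 2 * min (Real.exp (-3) *
        (min t₀ 3 * Real.sinh (min t₀ 3) - 2 * Real.cosh (min t₀ 3) + 2)) 3,
      mul_pos hKpos (lt_min (mul_pos (Real.exp_pos _) hF₁pos) (by norm_num)), ?_⟩
    intro c hc hlt
    by_contra hcon
    push_neg at hcon
    obtain ⟨hA0, hy0, hrel, hcval⟩ := hfacts c hc
    have hcore := core_bound (k₂ / θ ^ 2) (Ac c) (θ * ybarA (Ac c)) t₀ hKpos hA0 ht₀ hcon hrel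
    rw [← hcval] at hcore
    linarith
  -- Part 1
  have hten : Filter.Tendsto Ac (nhdsWithin 0 (Set.Ioi 0)) (nhds (k₂ / θ ^ 2)) := by
    rw [Metric.tendsto_nhdsWithin_nhds]
    intro ε hε
    have ht₀ : 0 < min (ε * θ ^ 2 / k₂) 1 := lt_min (by positivity) one_pos
    obtain ⟨δ, hδ, hδp⟩ := key _ ht₀
    refine ⟨δ, hδ, ?_⟩
    intro c hc hdist
    have hc' : 0 < c := hc
    rw [Real.dist_eq, sub_zero, abs_of_pos hc'] at hdist
    have ht := hδp c hc' hdist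
    obtain ⟨hA0, hy0, hrel, _⟩ := hfacts c hc'
    have hA1 : Ac c < k₂ / θ ^ 2 := (hAc c hc').2.1
    set t := θ * ybarA (Ac c) with htdef
    have ht0 : 0 < t := mul_pos hθ0 hy0
    have htlt1 : t < 1 := lt_of_lt_of_le ht (min_le_right _ _)
    have hS : 0 < Real.sinh t := Real.sinh_pos_iff.mpr ht0
    -- `Ac c > (k₂/θ²) (1 - t)`
    have h1 : Real.sinh t < t * Real.cosh t := aux_sinh_lt_mul_cosh ht0
    have h2 : Real.cosh t ≤ Real.exp t := aux_cosh_le_exp ht0.le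
    have h3 : 1 - t < Real.exp (-t) := by
      have := Real.add_one_lt_exp (x := -t) (by linarith)
      linarith
    have hE : Real.exp (-t) * Real.exp t = 1 := by rw [← Real.exp_add]; simp
    have hb' : (1 - t) * Real.exp t < 1 := by
      have := mul_lt_mul_of_pos_right h3 (Real.exp_pos t)
      rwa [hE] at this
    have h4 : (1 - t) * Real.sinh t < t := by
      calc (1 - t) * Real.sinh t < (1 - t) * (t * Real.cosh t) :=
            mul_lt_mul_of_pos_left h1 (by linarith)
        _ ≤ (1 - t) * (t * Real.exp t) :=
            mul_le_mul_of_nonneg_left (mul_le_mul_of_nonneg_left h2 ht0.le) (by linarith)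
        _ = t * ((1 - t) * Real.exp t) := by ring
        _ < t * 1 := mul_lt_mul_of_pos_left hb' ht0
        _ = t := mul_one t
    have hAgt : k₂ / θ ^ 2 * (1 - t) < Ac c := by
      have h5 : (k₂ / θ ^ 2 * (1 - t)) * Real.sinh t < Ac c * Real.sinh t := by
        calc (k₂ / θ ^ 2 * (1 - t)) * Real.sinh t
            = k₂ / θ ^ 2 * ((1 - t) * Real.sinh t) := by ring
          _ < k₂ / θ ^ 2 * t := mul_lt_mul_of_pos_left h4 hKpos
          _ = Ac c * Real.sinh t := hrel.symm
      exact lt_of_mul_lt_mul_right h5 hS.le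
    have h6 : k₂ / θ ^ 2 * t < ε := by
      have h7 : t < ε * θ ^ 2 / k₂ := lt_of_lt_of_le ht (min_le_left _ _)
      have h8 := mul_lt_mul_of_pos_left h7 hKpos
      have heq : k₂ / θ ^ 2 * (ε * θ ^ 2 / k₂) = ε := by field_simp
      linarith
    rw [Real.dist_eq, abs_lt]
    have hexp : k₂ / θ ^ 2 * (1 - t) = k₂ / θ ^ 2 - k₂ / θ ^ 2 * t := by ring
    constructor <;> linarith
  refine ⟨hten, ?_⟩
  -- Part 2
  have hconst : 2 * (k₂ / θ ^ 2) + k₀ = yv / ρ := by rw [hk₀]; ring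
  have hlim2 : Filter.Tendsto (fun c => 2 * Ac c + k₀) (nhdsWithin 0 (Set.Ioi 0))
      (nhds (yv / ρ)) := by
    have h := (hten.const_mul 2).add_const k₀
    rwa [hconst] at h
  have hid : Filter.Tendsto (fun c : ℝ => c) (nhdsWithin 0 (Set.Ioi 0)) (nhds 0) :=
    Filter.tendsto_id.mono_left nhdsWithin_le_nhds
  have hlim3 : Filter.Tendsto (fun c => 2 * Ac c + k₀ - c) (nhdsWithin 0 (Set.Ioi 0))
      (nhds (yv / ρ)) := by
    have := hlim2.sub hid
    simpa using this
  have phi_xv : ∀ A : ℝ, phiFun θ k₂ k₀ xv A xv = 2 * A + k₀ := by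
    intro A
    simp [phiFun]
    ring
  intro x
  by_cases hx : x = xv
  · subst hx
    apply Filter.Tendsto.congr' _ hlim2
    filter_upwards [self_mem_nhdsWithin] with c hc
    have hy0 := (hfacts c hc).2.1
    rw [VFun, if_pos ⟨by linarith, by linarith⟩, phi_xv]
  · have hd : 0 < |x - xv| := abs_pos.mpr (sub_ne_zero.mpr hx)
    obtain ⟨δ, hδ, hδp⟩ := key (θ * |x - xv|) (mul_pos hθ0 hd)
    apply Filter.Tendsto.congr' _ hlim3
    filter_upwards [Ioo_mem_nhdsGT_of_mem (Set.mem_Ico.mpr ⟨le_refl (0:ℝ), hδ⟩)] with c hc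
    obtain ⟨hc0, hcδ⟩ := hc
    have hts := hδp c hc0 hcδ
    have hylt : ybarA (Ac c) < |x - xv| := lt_of_mul_lt_mul_left hts hθ0.le
    rw [VFun, if_neg, phi_xv]
    rintro ⟨hl, hr⟩
    have : |x - xv| < ybarA (Ac c) := abs_sub_lt_iff.mpr ⟨by linarith, by linarith⟩
    linarith
end
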